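/- At the socially optimal number of drivers n* = (α·τ·λ_d·(c_r+c_d)/c_d)^{1/(α+1)}, the ratio between the drivers' average waiting time for a dispatch n*/λ_d and the riders' pick-up time η(n*) = τ·(n*)^{−α} equals α·(c_r + c_d)/c_d, independent of λ_r and the distribution of rider values. -/
import Mathlib


/-- At `n* = (α τ λ_d (c_r+c_d)/c_d)^{1/(α+1)}`, the ratio between drivers' average
waiting time `n*/λ_d` and riders' pick-up time `τ (n*)^{-α}` equals `α (c_r+c_d)/c_d`. -/
theorem stmt_1 (lamd tau cd cr alpha : ℝ)
    (hlamd : 0 < lamd) (htau : 0 < tau) (hcd : 0 < cd) (hcr : 0 ≤ cr) (halpha : 0 < alpha)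
    (nstar : ℝ)
    (hnstar : nstar = (alpha * tau * lamd * (cr + cd) / cd) ^ (1 / (alpha + 1))) :
    (nstar / lamd) / (tau * nstar ^ (-alpha)) = alpha * (cr + cd) / cd := by
  have hA : 0 < alpha * tau * lamd * (cr + cd) / cd := by positivity
  have hn : 0 < nstar := by rw [hnstar]; positivity
  have hpow : nstar ^ (alpha + 1) = alpha * tau * lamd * (cr + cd) / cd := by
    rw [hnstar, ← Real.rpow_mul hA.le, one_div,
      inv_mul_cancel₀ (by positivity), Real.rpow_one]
  have h1 : nstar = nstar ^ (-alpha) * nstar ^ (alpha + 1) := by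
    rw [← Real.rpow_add hn]
    norm_num
  have hne : nstar ^ (-alpha) ≠ 0 := (Real.rpow_pos_of_pos hn _).ne'
  rw [div_div, eq_div_iff hcd.ne', div_mul_eq_mul_div, div_eq_iff (by positivity)]
  calc nstar * cd = nstar ^ (-alpha) * (nstar ^ (alpha + 1) * cd) := by nth_rewrite 1 [h1]; ring
    _ = nstar ^ (-alpha) * (alpha * tau * lamd * (cr + cd)) := by
        rw [hpow]; field_simp
    _ = alpha * (cr + cd) * (lamd * (tau * nstar ^ (-alpha))) := by ring
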